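/- Let k ≥ 1, ε > 0, and let M assign to each x ∈ {0,1}^k a Borel probability measure M(x) on ℝ^k such that for all x, y ∈ {0,1}^k with Σ_{i=1}^k |x_i − y_i| ≤ 1 and every Borel set S ⊆ ℝ^k, M(x)(S) ≤ e^ε · M(y)(S). Then there exists x ∈ {0,1}^k such that ∫ Σ_{i=1}^k |x_i − w_i| dM(x)(w) ≥ (k/2)·e^{−ε}. -/

import Mathlib

open MeasureTheory

lemma dp_lintegral_aux {α : Type*} [MeasurableSpace α] (μ ν : Measure α) (c : ENNReal)
    (h : ∀ S, MeasurableSet S → μ S ≤ c * ν S) (f : α → ENNReal) :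
    ∫⁻ a, f a ∂μ ≤ c * ∫⁻ a, f a ∂ν := by
  have : μ ≤ c • ν := Measure.le_iff.2 (by intro s hs; simpa using h s hs)
  calc ∫⁻ a, f a ∂μ ≤ ∫⁻ a, f a ∂(c • ν) := lintegral_mono' this le_rfl
    _ = c * ∫⁻ a, f a ∂ν := lintegral_smul_measure c f

/-- Lower bound for privately releasing binary vectors: if `M` is an
`ε`-differentially private mechanism on `{0,1}^k` (neighbors: vectors at
ℓ1-distance at most 1) with values Borel probability measures on `ℝ^k`, then
some input `x` incurs expected ℓ1 error at least `(k/2)·e^{−ε}`.  Here a binary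
vector is represented as `x : Fin k → Bool` with real embedding
`i ↦ if x i then 1 else 0`. -/
theorem binary_vector_dp_lower_bound (k : ℕ) (hk : 1 ≤ k) (ε : ℝ) (hε : 0 < ε)
    (M : (Fin k → Bool) → Measure (Fin k → ℝ))
    (hprob : ∀ x, IsProbabilityMeasure (M x))
    (hdp : ∀ x y : Fin k → Bool,
      (∑ i, |(if x i then (1 : ℝ) else 0) - (if y i then (1 : ℝ) else 0)|) ≤ 1 →
      ∀ S : Set (Fin k → ℝ), MeasurableSet S →
        M x S ≤ ENNReal.ofReal (Real.exp ε) * M y S) :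
    ∃ x : Fin k → Bool,
      ENNReal.ofReal (((k : ℝ) / 2) * Real.exp (-ε)) ≤
        ∫⁻ w, ENNReal.ofReal (∑ i, |(if x i then (1 : ℝ) else 0) - w i|) ∂(M x) := by
  classical
  set emb : (Fin k → Bool) → Fin k → ℝ := fun x i => if x i then (1 : ℝ) else 0 with hemb
  set flip : (Fin k → Bool) → Fin k → (Fin k → Bool) :=
    fun x i => Function.update x i (!x i) with hflip
  -- per-coordinate expected error
  set A : (Fin k → Bool) → Fin k → ENNReal :=
    fun x i => ∫⁻ w, ENNReal.ofReal |emb x i - w i| ∂(M x) with hA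
  have measA : ∀ (a : ℝ) (i : Fin k),
      Measurable (fun w : Fin k → ℝ => ENNReal.ofReal |a - w i|) :=
    fun a i => ((measurable_const.sub (measurable_pi_apply i)).abs).ennreal_ofReal
  -- flip is a neighbor
  have hnb : ∀ x i, (∑ j, |emb x j - emb (flip x i) j|) ≤ 1 := by
    intro x i
    have : ∀ j, |emb x j - emb (flip x i) j| = if j = i then 1 else 0 := by
      intro j
      by_cases hj : j = i
      · subst hj
        simp only [hflip, hemb, Function.update_self]
        cases x j <;> norm_num
      · simp [hflip, hemb, Function.update_of_ne hj, hj]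
    rw [Finset.sum_congr rfl (fun j _ => this j)]
    simp
  have hflipemb : ∀ x i, emb (flip x i) i = 1 - emb x i := by
    intro x i
    simp only [hflip, hemb, Function.update_self]
    cases x i <;> norm_num
  -- key inequality: e^{-ε} ≤ A x i + A (flip x i) i
  have key : ∀ x i, ENNReal.ofReal (Real.exp (-ε)) ≤ A x i + A (flip x i) i := by
    intro x i
    have hpt : ∀ w : Fin k → ℝ,
        (1 : ENNReal) ≤ ENNReal.ofReal |emb x i - w i|
          + ENNReal.ofReal |emb (flip x i) i - w i| := by
      intro w
      rw [← ENNReal.ofReal_add (abs_nonneg _) (abs_nonneg _), ← ENNReal.ofReal_one]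
      apply ENNReal.ofReal_le_ofReal
      rw [hflipemb x i]
      have habs := abs_sub (emb x i - w i) (1 - emb x i - w i)
      have heq : (emb x i - w i) - (1 - emb x i - w i) = 2 * emb x i - 1 := by ring
      rw [heq] at habs
      have h3 : |2 * emb x i - 1| = 1 := by
        cases hx : x i <;> simp [hemb, hx]; norm_num
      linarith
    have h1 : (1 : ENNReal) ≤ A x i
        + ∫⁻ w, ENNReal.ofReal |emb (flip x i) i - w i| ∂(M x) := by
      have := hprob x
      calc (1 : ENNReal) = ∫⁻ _, (1 : ENNReal) ∂(M x) := by simp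
        _ ≤ ∫⁻ w, (ENNReal.ofReal |emb x i - w i|
              + ENNReal.ofReal |emb (flip x i) i - w i|) ∂(M x) :=
            lintegral_mono hpt
        _ = A x i + ∫⁻ w, ENNReal.ofReal |emb (flip x i) i - w i| ∂(M x) :=
            lintegral_add_left (measA _ i) _
    have h2 : ∫⁻ w, ENNReal.ofReal |emb (flip x i) i - w i| ∂(M x)
        ≤ ENNReal.ofReal (Real.exp ε) * A (flip x i) i := by
      refine dp_lintegral_aux _ _ _ (fun S hS => ?_) _
      exact hdp x (flip x i) (hnb x i) S hS
    have hmul : ENNReal.ofReal (Real.exp (-ε)) * ENNReal.ofReal (Real.exp ε) = 1 := by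
      rw [← ENNReal.ofReal_mul (Real.exp_pos _).le, ← Real.exp_add]
      simp
    have hle1 : ENNReal.ofReal (Real.exp (-ε)) ≤ 1 := by
      rw [← ENNReal.ofReal_one]
      exact ENNReal.ofReal_le_ofReal (Real.exp_le_one_iff.2 (by linarith))
    calc ENNReal.ofReal (Real.exp (-ε))
        = ENNReal.ofReal (Real.exp (-ε)) * 1 := (mul_one _).symm
      _ ≤ ENNReal.ofReal (Real.exp (-ε)) * (A x i
            + ∫⁻ w, ENNReal.ofReal |emb (flip x i) i - w i| ∂(M x)) :=
          mul_le_mul_right h1 _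
      _ ≤ ENNReal.ofReal (Real.exp (-ε)) * (A x i
            + ENNReal.ofReal (Real.exp ε) * A (flip x i) i) :=
          mul_le_mul_right (add_le_add_right h2 _) _
      _ = ENNReal.ofReal (Real.exp (-ε)) * A x i
            + (ENNReal.ofReal (Real.exp (-ε)) * ENNReal.ofReal (Real.exp ε))
              * A (flip x i) i := by ring
      _ ≤ A x i + A (flip x i) i := by
          rw [hmul, one_mul]
          exact add_le_add_left (mul_le_of_le_one_left zero_le hle1) _
  -- total error of input x
  set G : (Fin k → Bool) → ENNReal :=
    fun x => ∫⁻ w, ENNReal.ofReal (∑ i, |emb x i - w i|) ∂(M x) with hG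
  have hGsum : ∀ x, G x = ∑ i, A x i := by
    intro x
    simp only [hG, hA]
    rw [← lintegral_finset_sum _ (fun i _ => measA _ i)]
    congr 1
    ext w
    rw [ENNReal.ofReal_sum_of_nonneg (fun i _ => abs_nonneg _)]
  -- flip is an involution in each coordinate, so a bijection
  have hflipinv : ∀ i x, flip (flip x i) i = x := by
    intro i x
    simp only [hflip]
    ext j
    by_cases hj : j = i
    · subst hj; simp
    · simp [Function.update_of_ne hj]
  -- sum the key inequality
  have hsum : (Fintype.card (Fin k → Bool) : ENNReal) * ((k : ENNReal) *
      ENNReal.ofReal (Real.exp (-ε))) ≤ 2 * ∑ x : Fin k → Bool, G x := by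
    have h1 : ∑ x : Fin k → Bool, ∑ i : Fin k, ENNReal.ofReal (Real.exp (-ε))
        ≤ ∑ x : Fin k → Bool, ∑ i : Fin k, (A x i + A (flip x i) i) :=
      Finset.sum_le_sum fun x _ => Finset.sum_le_sum fun i _ => key x i
    have h2 : ∑ x : Fin k → Bool, ∑ i : Fin k, (A x i + A (flip x i) i)
        = 2 * ∑ x : Fin k → Bool, ∑ i : Fin k, A x i := by
      rw [two_mul]
      simp only [Finset.sum_add_distrib]
      congr 1
      rw [Finset.sum_comm]
      conv_rhs => rw [Finset.sum_comm]
      refine Finset.sum_congr rfl fun i _ => ?_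
      exact Finset.sum_bijective (fun x => flip x i)
        (Function.Involutive.bijective (hflipinv i)) (by simp) (by simp)
    have h3 : ∑ x : Fin k → Bool, ∑ i : Fin k, ENNReal.ofReal (Real.exp (-ε))
        = (Fintype.card (Fin k → Bool) : ENNReal) * ((k : ENNReal) *
          ENNReal.ofReal (Real.exp (-ε))) := by
      simp [Finset.sum_const, mul_assoc]
    calc (Fintype.card (Fin k → Bool) : ENNReal) * ((k : ENNReal) *
          ENNReal.ofReal (Real.exp (-ε)))
        = ∑ x : Fin k → Bool, ∑ i : Fin k, ENNReal.ofReal (Real.exp (-ε)) := h3.symm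
      _ ≤ ∑ x : Fin k → Bool, ∑ i : Fin k, (A x i + A (flip x i) i) := h1
      _ = 2 * ∑ x : Fin k → Bool, ∑ i : Fin k, A x i := h2
      _ = 2 * ∑ x : Fin k → Bool, G x := by
          congr 1; exact Finset.sum_congr rfl fun x _ => (hGsum x).symm
  -- pick a maximizer
  obtain ⟨xm, -, hxm⟩ := Finset.exists_max_image (Finset.univ : Finset (Fin k → Bool)) G
    ⟨fun _ => true, Finset.mem_univ _⟩
  refine ⟨xm, ?_⟩
  have hbound : ∑ x : Fin k → Bool, G x
      ≤ (Fintype.card (Fin k → Bool) : ENNReal) * G xm := by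
    calc ∑ x : Fin k → Bool, G x ≤ ∑ _x : Fin k → Bool, G xm :=
          Finset.sum_le_sum fun x _ => hxm x (Finset.mem_univ x)
      _ = (Fintype.card (Fin k → Bool) : ENNReal) * G xm := by simp [Finset.sum_const]
  have hcard : (Fintype.card (Fin k → Bool) : ENNReal) ≠ 0 := by
    simp [Fintype.card_pos.ne']
  have hcard' : (Fintype.card (Fin k → Bool) : ENNReal) ≠ ⊤ := by
    exact ENNReal.natCast_ne_top _
  have hmain : (k : ENNReal) * ENNReal.ofReal (Real.exp (-ε)) ≤ 2 * G xm := by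
    have := hsum.trans (mul_le_mul_right hbound 2)
    rw [show (2 : ENNReal) * ((Fintype.card (Fin k → Bool) : ENNReal) * G xm)
      = (Fintype.card (Fin k → Bool) : ENNReal) * (2 * G xm) by ring] at this
    exact (ENNReal.mul_le_mul_iff_right hcard hcard').1 this
  have h2G : 2 * ENNReal.ofReal (((k : ℝ) / 2) * Real.exp (-ε))
      = (k : ENNReal) * ENNReal.ofReal (Real.exp (-ε)) := by
    rw [← ENNReal.ofReal_natCast k, ← ENNReal.ofReal_mul (by positivity),
      ← ENNReal.ofReal_ofNat 2, ← ENNReal.ofReal_mul (by norm_num)]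
    congr 1
    ring
  have : 2 * ENNReal.ofReal (((k : ℝ) / 2) * Real.exp (-ε)) ≤ 2 * G xm := by
    rw [h2G]; exact hmain
  exact (ENNReal.mul_le_mul_iff_right (by norm_num) (by norm_num)).1 this
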